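/- Assume (A0) and define 𝒱_F := {v ∈ 𝒱 : Σ_{k≥0} (α_k + v β_k) < ∞}. Then exactly one of the following holds: (i) Σ_{k≥0} α_k < ∞ and Σ_{k≥0} β_k < ∞, and 𝒱_F = 𝒱; (ii) Σ_{k≥0} α_k < ∞ and Σ_{k≥0} β_k = ∞, and 𝒱_F = 𝒱 ∩ {0}; (iii) Σ_{k≥0} α_k = Σ_{k≥0} β_k = ∞, and either 𝒱_F = ∅ or 𝒱_F = {v} for some v with v_0 ≤ v < 0. Moreover, if additionally (A1) holds (Σ_{k≥1} 1/a_k = ∞) and Σ_{k≥0} α_k = ∞, then 𝒱_F = ∅. -/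

import Mathlib

open Finset Filter Topology MeasureTheory
open scoped ENNReal

/-- `alphaSeq a b k = (a_1 ⋯ a_k)/(b_1 ⋯ b_k)`, with `alphaSeq a b 0 = 1`. -/
noncomputable def alphaSeq (a b : ℕ → ℝ) (k : ℕ) : ℝ :=
  ∏ i ∈ Finset.Icc 1 k, (a i / b i)

/-- `betaSeq a b k = 1/b_k + a_k/(b_k b_{k-1}) + ⋯ + (a_k ⋯ a_2)/(b_k ⋯ b_1)`,
with `betaSeq a b 0 = 0`. -/
noncomputable def betaSeq (a b : ℕ → ℝ) (k : ℕ) : ℝ :=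
  ∑ j ∈ Finset.Icc 1 k, (∏ i ∈ Finset.Icc (j+1) k, a i) / (∏ i ∈ Finset.Icc j k, b i)

/-- The stable traffic equation: `ρ 0 = 1` and
`(b_i + a_{i+1}) ρ_i = a_i ρ_{i-1} + b_{i+1} ρ_{i+1}` for all `i ≥ 1`. -/
def IsSTE (a b : ℕ → ℝ) (ρ : ℕ → ℝ) : Prop :=
  ρ 0 = 1 ∧ ∀ i, 1 ≤ i → (b i + a (i+1)) * ρ i = a i * ρ (i-1) + b (i+1) * ρ (i+1)

/-- An admissible solution of the stable traffic equation: moreover `ρ k ∈ (0,1)` for `k ≥ 1`. -/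
def IsAdmissible (a b : ℕ → ℝ) (ρ : ℕ → ℝ) : Prop :=
  IsSTE a b ρ ∧ ∀ k, 1 ≤ k → ρ k ∈ Set.Ioo (0:ℝ) 1

/-- The set `𝒱` of `v` such that `α + v β` is an admissible solution. -/
def speedSet (a b : ℕ → ℝ) : Set ℝ :=
  {v : ℝ | IsAdmissible a b (fun k => alphaSeq a b k + v * betaSeq a b k)}



section Aux

variable {a b : ℕ → ℝ}

lemma alpha_zero : alphaSeq a b 0 = 1 := by simp [alphaSeq]

lemma beta_zero : betaSeq a b 0 = 0 := by simp [betaSeq]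

lemma alpha_pos (ha : ∀ k, 1 ≤ k → 0 < a k) (hb : ∀ k, 1 ≤ k → 0 < b k) (k : ℕ) :
    0 < alphaSeq a b k := by
  apply Finset.prod_pos
  intro i hi
  simp only [Finset.mem_Icc] at hi
  exact div_pos (ha i hi.1) (hb i hi.1)

lemma beta_nonneg (ha : ∀ k, 1 ≤ k → 0 < a k) (hb : ∀ k, 1 ≤ k → 0 < b k) (k : ℕ) :
    0 ≤ betaSeq a b k := by
  apply Finset.sum_nonneg
  intro j hj
  simp only [Finset.mem_Icc] at hj
  apply div_nonneg
  · exact Finset.prod_nonneg fun i hi => by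
      simp only [Finset.mem_Icc] at hi; exact (ha i (by omega)).le
  · exact Finset.prod_nonneg fun i hi => by
      simp only [Finset.mem_Icc] at hi; exact (hb i (by omega)).le

lemma beta_pos (ha : ∀ k, 1 ≤ k → 0 < a k) (hb : ∀ k, 1 ≤ k → 0 < b k) (k : ℕ)
    (hk : 1 ≤ k) : 0 < betaSeq a b k := by
  apply Finset.sum_pos
  · intro j hj
    simp only [Finset.mem_Icc] at hj
    apply div_pos
    · exact Finset.prod_pos fun i hi => by
        simp only [Finset.mem_Icc] at hi; exact ha i (by omega)
    · exact Finset.prod_pos fun i hi => by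
        simp only [Finset.mem_Icc] at hi; exact hb i (by omega)
  · exact ⟨1, by simp [Finset.mem_Icc, hk]⟩

lemma alpha_succ (k : ℕ) :
    alphaSeq a b (k+1) = alphaSeq a b k * (a (k+1) / b (k+1)) := by
  unfold alphaSeq
  exact Finset.prod_Icc_succ_top (by omega) _

lemma beta_succ (k : ℕ) :
    betaSeq a b (k+1) = a (k+1) / b (k+1) * betaSeq a b k + 1 / b (k+1) := by
  unfold betaSeq
  rw [Finset.sum_Icc_succ_top (by omega : 1 ≤ k+1)]
  have h2 : (∏ i ∈ Finset.Icc (k+1+1) (k+1), a i) / (∏ i ∈ Finset.Icc (k+1) (k+1), b i)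
      = 1 / b (k+1) := by
    rw [Finset.Icc_eq_empty (by omega), Finset.Icc_self]
    simp
  rw [h2, Finset.mul_sum]
  congr 1
  apply Finset.sum_congr rfl
  intro j hj
  simp only [Finset.mem_Icc] at hj
  rw [Finset.prod_Icc_succ_top (by omega : j+1 ≤ k+1),
      Finset.prod_Icc_succ_top (by omega : j ≤ k+1), mul_div_mul_comm]
  ring

lemma rho_rec (hb : ∀ k, 1 ≤ k → 0 < b k) (v : ℝ) (k : ℕ) :
    b (k+1) * (alphaSeq a b (k+1) + v * betaSeq a b (k+1))
      = a (k+1) * (alphaSeq a b k + v * betaSeq a b k) + v := by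
  have hbk : b (k+1) ≠ 0 := (hb (k+1) (by omega)).ne'
  rw [alpha_succ, beta_succ]
  field_simp
  ring

lemma alpha_le_beta (ha : ∀ k, 1 ≤ k → 0 < a k) (hb : ∀ k, 1 ≤ k → 0 < b k) (k : ℕ) :
    alphaSeq a b (k+1) ≤ a 1 * betaSeq a b (k+1) := by
  induction k with
  | zero =>
      rw [alpha_succ, beta_succ, alpha_zero, beta_zero]
      have ha1 : a 1 ≠ 0 := (ha 1 le_rfl).ne'
      field_simp
      simp
  | succ n ih =>
      rw [alpha_succ, beta_succ]
      have hab : 0 < a (n+2) / b (n+2) :=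
        div_pos (ha _ (by omega)) (hb _ (by omega))
      have h1 : 0 < a 1 := ha 1 le_rfl
      have h2 : 0 < 1 / b (n+2) := one_div_pos.2 (hb _ (by omega))
      calc alphaSeq a b (n+1) * (a (n+2) / b (n+2))
          ≤ (a 1 * betaSeq a b (n+1)) * (a (n+2) / b (n+2)) := by
            exact mul_le_mul_of_nonneg_right ih hab.le
        _ ≤ a 1 * (a (n+2) / b (n+2) * betaSeq a b (n+1) + 1 / b (n+2)) := by
            nlinarith
end Aux

/-- Under (A0), with 𝒱_F := {v ∈ 𝒱 : Σ_k (alpha_k + v beta_k) < ∞}, exactly one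
of: (i) Σ alpha < ∞ and Σ beta < ∞, and 𝒱_F = 𝒱; (ii) Σ alpha < ∞ and Σ beta = ∞, and
𝒱_F = 𝒱 ∩ {0}; (iii) Σ alpha = Σ beta = ∞, and either 𝒱_F = ∅ or 𝒱_F = {v} for some
v0 ≤ v < 0. Moreover, if also (A1) holds and Σ alpha = ∞, then 𝒱_F = ∅. -/
theorem stmt16 (a b : ℕ → ℝ) (ha : ∀ k, 1 ≤ k → 0 < a k) (hb : ∀ k, 1 ≤ k → 0 < b k)
    (v0 : ℝ)
    (hv0 : Filter.Tendsto (fun k => alphaSeq a b k / betaSeq a b k) Filter.atTop (𝓝 (-v0)))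
    (VF : Set ℝ)
    (hVF : VF = {v ∈ speedSet a b |
      Summable (fun k : ℕ => alphaSeq a b k + v * betaSeq a b k)}) :
    ((Summable (alphaSeq a b) ∧ Summable (betaSeq a b) ∧ VF = speedSet a b) ∨
     (Summable (alphaSeq a b) ∧ ¬ Summable (betaSeq a b) ∧
        VF = speedSet a b ∩ {0}) ∨
     (¬ Summable (alphaSeq a b) ∧ ¬ Summable (betaSeq a b) ∧
        (VF = ∅ ∨ ∃ v : ℝ, v0 ≤ v ∧ v < 0 ∧ VF = {v}))) ∧
    (¬ Summable (fun k : ℕ => 1 / a (k+1)) → ¬ Summable (alphaSeq a b) → VF = ∅) := by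

  subst hVF
  -- basic facts
  have hbeta_of_alpha : ¬ Summable (alphaSeq a b) → ¬ Summable (betaSeq a b) := by
    intro hα hβ
    apply hα
    have h1 : Summable (fun k => a 1 * betaSeq a b (k+1)) :=
      ((summable_nat_add_iff 1).2 hβ).mul_left _
    have h2 : Summable (fun k => alphaSeq a b (k+1)) :=
      Summable.of_nonneg_of_le (fun k => (alpha_pos ha hb _).le)
        (fun k => alpha_le_beta ha hb k) h1
    exact (summable_nat_add_iff 1).1 h2
  have hneg : ∀ v : ℝ, v ∈ speedSet a b →
      Summable (fun k : ℕ => alphaSeq a b k + v * betaSeq a b k) →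
      ¬ Summable (alphaSeq a b) → v < 0 := by
    intro v hvS hvSum hα
    by_contra h
    push_neg at h
    apply hα
    refine Summable.of_nonneg_of_le (fun k => (alpha_pos ha hb k).le) (fun k => ?_) hvSum
    have := mul_nonneg h (beta_nonneg ha hb k)
    linarith
  constructor
  · by_cases hα : Summable (alphaSeq a b)
    · by_cases hβ : Summable (betaSeq a b)
      · left
        refine ⟨hα, hβ, ?_⟩
        ext v
        simp only [Set.mem_sep_iff, and_iff_left_iff_imp]
        intro _
        exact hα.add (hβ.mul_left v)
      · right; left
        refine ⟨hα, hβ, ?_⟩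
        ext v
        simp only [Set.mem_sep_iff, Set.mem_inter_iff, Set.mem_singleton_iff]
        constructor
        · rintro ⟨hvS, hs⟩
          refine ⟨hvS, ?_⟩
          by_contra hv
          apply hβ
          have h1 : Summable (fun k => v * betaSeq a b k) := by
            have h2 := hs.sub hα
            simpa using h2
          have h3 := h1.mul_left v⁻¹
          have h4 : (fun k => v⁻¹ * (v * betaSeq a b k)) = betaSeq a b := by
            funext k
            rw [← mul_assoc, inv_mul_cancel₀ hv, one_mul]
          rwa [h4] at h3
        · rintro ⟨hvS, rfl⟩
          exact ⟨hvS, by simpa using hα⟩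
    · have hβ := hbeta_of_alpha hα
      right; right
      refine ⟨hα, hβ, ?_⟩
      rcases Set.eq_empty_or_nonempty
          {v ∈ speedSet a b |
            Summable (fun k : ℕ => alphaSeq a b k + v * betaSeq a b k)} with h | ⟨v, hv⟩
      · exact Or.inl h
      · right
        obtain ⟨hvS, hvSum⟩ := hv
        have hvneg : v < 0 := hneg v hvS hvSum hα
        have hv0le : v0 ≤ v := by
          have ht : Filter.Tendsto (fun k => -(alphaSeq a b k / betaSeq a b k))
              Filter.atTop (𝓝 v0) := by
            simpa using hv0.neg
          refine le_of_tendsto ht ?_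
          filter_upwards [Filter.eventually_ge_atTop 1] with k hk
          have hbp := beta_pos ha hb k hk
          have hpos : 0 < alphaSeq a b k + v * betaSeq a b k := (hvS.2 k hk).1
          rw [← neg_div, div_le_iff₀ hbp]
          nlinarith
        refine ⟨v, hv0le, hvneg, ?_⟩
        ext w
        simp only [Set.mem_sep_iff, Set.mem_singleton_iff]
        constructor
        · rintro ⟨hwS, hwSum⟩
          by_contra hwv
          apply hβ
          have h1 : Summable (fun k => (v - w) * betaSeq a b k) := by
            have h2 := hvSum.sub hwSum
            have h3 : (fun k => (alphaSeq a b k + v * betaSeq a b k)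
                - (alphaSeq a b k + w * betaSeq a b k))
                = fun k => (v - w) * betaSeq a b k := by
              funext k; ring
            rwa [h3] at h2
          have hvw : v - w ≠ 0 := sub_ne_zero.2 fun h => hwv h.symm
          have h3 := h1.mul_left (v - w)⁻¹
          have h4 : (fun k => (v - w)⁻¹ * ((v - w) * betaSeq a b k)) = betaSeq a b := by
            funext k
            rw [← mul_assoc, inv_mul_cancel₀ hvw, one_mul]
          rwa [h4] at h3
        · rintro rfl
          exact ⟨hvS, hvSum⟩
  · intro hA1 hα
    ext w
    simp only [Set.mem_sep_iff, Set.mem_empty_iff_false, iff_false, not_and]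
    intro hwS hwSum
    have hwneg : w < 0 := hneg w hwS hwSum hα
    apply hA1
    have hρpos : ∀ k, 0 < alphaSeq a b k + w * betaSeq a b k := by
      intro k
      rcases Nat.eq_zero_or_pos k with rfl | hk
      · rw [alpha_zero, beta_zero]; norm_num
      · exact (hwS.2 k hk).1
    have hbound : ∀ k : ℕ, 1 / a (k+1) ≤ (alphaSeq a b k + w * betaSeq a b k) / (-w) := by
      intro k
      have hr := rho_rec (a := a) hb w k
      have hb1 := hb (k+1) (by omega)
      have ha1 := ha (k+1) (by omega)
      have h1 : -w ≤ a (k+1) * (alphaSeq a b k + w * betaSeq a b k) := by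
        nlinarith [mul_pos hb1 (hρpos (k+1))]
      rw [div_le_div_iff₀ ha1 (by linarith : (0:ℝ) < -w)]
      nlinarith
    exact Summable.of_nonneg_of_le (fun k => (one_div_pos.2 (ha (k+1) (by omega))).le) hbound
      (hwSum.div_const _)
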